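/- Let X1, Ŷ2, Y2, U, Y3 be discrete random variables on a finite probability space such that (X1, Ŷ2) → Y2 → U form a Markov chain (X1 and Ŷ2 jointly conditionally independent of U given Y2). Then I(X1, U, Ŷ2; Y3) − I(U, Ŷ2; Y2 | X1) ≥ I(X1, Ŷ2; Y3) − I(Ŷ2; Y2 | X1) + I(U; Y3) − I(U; Y2). -/

import Mathlib

open Finset

section InfoTheory

variable {Ω : Type*} [Fintype Ω]

/-- `p` is a probability mass function on the finite sample space `Ω`. -/
def IsPMF (p : Ω → ℝ) : Prop := (∀ ω, 0 ≤ p ω) ∧ ∑ ω, p ω = 1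

/-- Probability that the random variable `X` takes the value `a`. -/
noncomputable def prob (p : Ω → ℝ) {α : Type*} [Fintype α] [DecidableEq α]
    (X : Ω → α) (a : α) : ℝ :=
  ∑ ω, if X ω = a then p ω else 0

/-- Shannon entropy (base 2) of the random variable `X`. -/
noncomputable def ent (p : Ω → ℝ) {α : Type*} [Fintype α] [DecidableEq α]
    (X : Ω → α) : ℝ :=
  ∑ a, -(prob p X a * Real.logb 2 (prob p X a))

/-- Conditional entropy `H(X | Y)` (base 2). -/
noncomputable def condEnt (p : Ω → ℝ) {α β : Type*} [Fintype α] [DecidableEq α]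
    [Fintype β] [DecidableEq β] (X : Ω → α) (Y : Ω → β) : ℝ :=
  ent p (fun ω => (X ω, Y ω)) - ent p Y

/-- Mutual information `I(X; Y)` (base 2). -/
noncomputable def mutInfo (p : Ω → ℝ) {α β : Type*} [Fintype α] [DecidableEq α]
    [Fintype β] [DecidableEq β] (X : Ω → α) (Y : Ω → β) : ℝ :=
  ent p X + ent p Y - ent p (fun ω => (X ω, Y ω))

/-- Conditional mutual information `I(X; Y | Z)` (base 2). -/
noncomputable def condMutInfo (p : Ω → ℝ) {α β γ : Type*} [Fintype α] [DecidableEq α]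
    [Fintype β] [DecidableEq β] [Fintype γ] [DecidableEq γ]
    (X : Ω → α) (Y : Ω → β) (Z : Ω → γ) : ℝ :=
  condEnt p X Z + condEnt p Y Z - condEnt p (fun ω => (X ω, Y ω)) Z

/-- `X` and `Y` are conditionally independent given `Z`
(equivalently, `X → Z → Y` is a Markov chain). -/
def CondIndep (p : Ω → ℝ) {α β γ : Type*} [Fintype α] [DecidableEq α]
    [Fintype β] [DecidableEq β] [Fintype γ] [DecidableEq γ]
    (X : Ω → α) (Y : Ω → β) (Z : Ω → γ) : Prop :=
  ∀ a b c, prob p (fun ω => (X ω, Z ω)) (a, c) * prob p (fun ω => (Y ω, Z ω)) (b, c)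
    = prob p (fun ω => (X ω, Y ω, Z ω)) (a, b, c) * prob p Z c

/-- `X` and `Y` are independent. -/
def Indep (p : Ω → ℝ) {α β : Type*} [Fintype α] [DecidableEq α]
    [Fintype β] [DecidableEq β] (X : Ω → α) (Y : Ω → β) : Prop :=
  ∀ a b, prob p (fun ω => (X ω, Y ω)) (a, b) = prob p X a * prob p Y b

end InfoTheory

set_option linter.unusedSectionVars false

section H
variable {Ω : Type*} [Fintype Ω] {α β γ : Type*} [Fintype α] [DecidableEq α]
  [Fintype β] [DecidableEq β] [Fintype γ] [DecidableEq γ] {p : Ω → ℝ}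

lemma prob_nonneg (hp : IsPMF p) (X : Ω → α) (a : α) : 0 ≤ prob p X a := by
  apply Finset.sum_nonneg; intro ω _
  split
  · exact hp.1 ω
  · exact le_refl 0

lemma sum_prob (hp : IsPMF p) (X : Ω → α) : ∑ a, prob p X a = 1 := by
  unfold prob
  rw [Finset.sum_comm]
  simp only [Finset.sum_ite_eq, Finset.mem_univ, if_true]
  exact hp.2

lemma prob_congr {X : Ω → α} {Y : Ω → β} {a : α} {b : β}
    (h : ∀ ω, X ω = a ↔ Y ω = b) : prob p X a = prob p Y b := by
  unfold prob; apply Finset.sum_congr rfl; intro ω _; rw [if_congr (h ω) rfl rfl]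

lemma sum_prob_pair_left (X : Ω → α) (Y : Ω → β) (b : β) :
    ∑ a, prob p (fun ω => (X ω, Y ω)) (a, b) = prob p Y b := by
  unfold prob
  rw [Finset.sum_comm]
  apply Finset.sum_congr rfl; intro ω _
  simp only [Prod.mk.injEq, ite_and]
  simp [Finset.sum_ite_eq]

lemma sum_prob_pair_right (X : Ω → α) (Y : Ω → β) (a : α) :
    ∑ b, prob p (fun ω => (X ω, Y ω)) (a, b) = prob p X a := by
  unfold prob
  rw [Finset.sum_comm]
  apply Finset.sum_congr rfl; intro ω _
  simp only [Prod.mk.injEq, ite_and]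
  by_cases h : X ω = a <;> simp [h, Finset.sum_ite_eq]

lemma prob_pair_le_fst (hp : IsPMF p) (X : Ω → α) (Y : Ω → β) (a : α) (b : β) :
    prob p (fun ω => (X ω, Y ω)) (a, b) ≤ prob p X a := by
  apply Finset.sum_le_sum; intro ω _
  simp only [Prod.mk.injEq, ite_and]
  split
  · split
    · exact le_refl _
    · exact hp.1 ω
  · exact le_refl 0

lemma prob_pair_le_snd (hp : IsPMF p) (X : Ω → α) (Y : Ω → β) (a : α) (b : β) :
    prob p (fun ω => (X ω, Y ω)) (a, b) ≤ prob p Y b := by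
  apply Finset.sum_le_sum; intro ω _
  simp only [Prod.mk.injEq, ite_and]
  split
  · split
    · exact le_refl _
    · exact le_refl 0
  · split
    · exact hp.1 ω
    · exact le_refl 0

lemma prob_comp_of_inj {f : α → β} (hf : Function.Injective f) (X : Ω → α) (a : α) :
    prob p (fun ω => f (X ω)) (f a) = prob p X a :=
  prob_congr fun ω => ⟨fun h => hf h, fun h => by rw [h]⟩

lemma prob_comp_eq_zero {f : α → β} (X : Ω → α) {b : β} (hb : ∀ a, f a ≠ b) :
    prob p (fun ω => f (X ω)) b = 0 := by
  unfold prob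
  apply Finset.sum_eq_zero; intro ω _
  simp [hb (X ω)]

lemma ent_comp_inj {f : α → β} (hf : Function.Injective f) (X : Ω → α) :
    ent p (fun ω => f (X ω)) = ent p X := by
  unfold ent
  rw [← Finset.sum_subset (Finset.subset_univ (Finset.univ.image f))]
  · rw [Finset.sum_image (fun a _ a' _ h => hf h)]
    apply Finset.sum_congr rfl; intro a _
    rw [prob_comp_of_inj hf]
  · intro b _ hb
    have : ∀ a, f a ≠ b := by
      intro a h; exact hb (Finset.mem_image.mpr ⟨a, Finset.mem_univ a, h⟩)
    rw [prob_comp_eq_zero X this]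
    simp


lemma sum_rot {ι₁ ι₂ ι₃ : Type*} [Fintype ι₁] [Fintype ι₂] [Fintype ι₃]
    (f : ι₁ → ι₂ → ι₃ → ℝ) :
    (∑ c, ∑ a, ∑ b, f a b c) = ∑ a, ∑ b, ∑ c, f a b c := by
  rw [Finset.sum_comm]
  exact Finset.sum_congr rfl fun a _ => Finset.sum_comm

lemma sum_rot' {ι₁ ι₂ ι₃ : Type*} [Fintype ι₁] [Fintype ι₂] [Fintype ι₃]
    (f : ι₁ → ι₂ → ι₃ → ℝ) :
    (∑ b, ∑ c, ∑ a, f a b c) = ∑ a, ∑ b, ∑ c, f a b c := by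
  rw [Finset.sum_comm]
  rw [show (∑ c, ∑ b, ∑ a, f a b c) = ∑ c, ∑ a, ∑ b, f a b c from
    Finset.sum_congr rfl fun c _ => Finset.sum_comm]
  exact sum_rot f

lemma markov_ent (hp : IsPMF p) (W : Ω → α) (U : Ω → β) (Y : Ω → γ)
    (h : CondIndep p W U Y) :
    ent p (fun ω => (W ω, U ω, Y ω)) + ent p Y
      = ent p (fun ω => (W ω, Y ω)) + ent p (fun ω => (U ω, Y ω)) := by
  classical
  set L : ℝ → ℝ := Real.logb 2 with hL
  set r : α → β → γ → ℝ := fun a b c => prob p (fun ω => (W ω, U ω, Y ω)) (a, b, c) with hr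
  set rW : α → γ → ℝ := fun a c => prob p (fun ω => (W ω, Y ω)) (a, c) with hrW
  set rU : β → γ → ℝ := fun b c => prob p (fun ω => (U ω, Y ω)) (b, c) with hrU
  set rY : γ → ℝ := fun c => prob p Y c with hrY
  have rcongr : ∀ a b c, r a b c = prob p (fun ω => (U ω, (W ω, Y ω))) (b, (a, c)) := by
    intro a b c
    apply prob_congr; intro ω
    constructor <;> (intro hh; simp only [Prod.mk.injEq] at hh ⊢; tauto)
  have hmW : ∀ a c, ∑ b, r a b c = rW a c := by
    intro a c
    calc ∑ b, r a b c = ∑ b, prob p (fun ω => (U ω, (W ω, Y ω))) (b, (a, c)) := by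
          apply Finset.sum_congr rfl; intro b _; exact rcongr a b c
      _ = rW a c := sum_prob_pair_left _ _ _
  have hmU : ∀ b c, ∑ a, r a b c = rU b c := fun b c =>
    sum_prob_pair_left W (fun ω => (U ω, Y ω)) (b, c)
  have hmY : ∀ c, ∑ a, ∑ b, r a b c = rY c := by
    intro c
    calc ∑ a, ∑ b, r a b c = ∑ a, rW a c := by
          apply Finset.sum_congr rfl; intro a _; exact hmW a c
      _ = rY c := sum_prob_pair_left W Y c
  have hrnn : ∀ a b c, 0 ≤ r a b c := fun a b c => prob_nonneg hp _ _
  have hleW : ∀ a b c, r a b c ≤ rW a c := by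
    intro a b c; rw [rcongr a b c]; exact prob_pair_le_snd hp _ _ _ _
  have hleU : ∀ a b c, r a b c ≤ rU b c := fun a b c =>
    prob_pair_le_snd hp W (fun ω => (U ω, Y ω)) a (b, c)
  have hleY : ∀ a b c, r a b c ≤ rY c := by
    intro a b c
    exact (hleU a b c).trans (prob_pair_le_snd hp U Y b c)
  have key : ∀ a b c, r a b c * L (rW a c) + r a b c * L (rU b c)
      = r a b c * L (r a b c) + r a b c * L (rY c) := by
    intro a b c
    rcases eq_or_lt_of_le (hrnn a b c) with h0 | h0
    · rw [← h0]; ring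
    · have hW0 : rW a c ≠ 0 := (h0.trans_le (hleW a b c)).ne'
      have hU0 : rU b c ≠ 0 := (h0.trans_le (hleU a b c)).ne'
      have hY0 : rY c ≠ 0 := (h0.trans_le (hleY a b c)).ne'
      have e := h a b c
      have : L (rW a c) + L (rU b c) = L (r a b c) + L (rY c) := by
        rw [hL, ← Real.logb_mul hW0 hU0, ← Real.logb_mul h0.ne' hY0]
        exact congrArg _ e
      linear_combination r a b c * this
  have eT : ent p (fun ω => (W ω, U ω, Y ω)) = -∑ a, ∑ b, ∑ c, r a b c * L (r a b c) := by
    unfold ent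
    rw [Fintype.sum_prod_type]
    simp only [Fintype.sum_prod_type, Finset.sum_neg_distrib]
    rfl
  have eY : ent p Y = -∑ a, ∑ b, ∑ c, r a b c * L (rY c) := by
    unfold ent
    simp only [Finset.sum_neg_distrib]
    rw [← sum_rot (fun a b c => r a b c * L (rY c))]
    congr 1
    apply Finset.sum_congr rfl; intro c _
    simp only [← Finset.sum_mul]
    rw [hmY c]
  have eW : ent p (fun ω => (W ω, Y ω)) = -∑ a, ∑ b, ∑ c, r a b c * L (rW a c) := by
    unfold ent
    rw [Fintype.sum_prod_type]
    simp only [Finset.sum_neg_distrib]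
    rw [show (∑ a, ∑ b, ∑ c, r a b c * L (rW a c)) = ∑ a, ∑ c, ∑ b, r a b c * L (rW a c) from
      Finset.sum_congr rfl fun a _ => Finset.sum_comm]
    congr 1
    apply Finset.sum_congr rfl; intro a _
    apply Finset.sum_congr rfl; intro c _
    rw [← Finset.sum_mul, hmW a c]
  have eU : ent p (fun ω => (U ω, Y ω)) = -∑ a, ∑ b, ∑ c, r a b c * L (rU b c) := by
    unfold ent
    rw [Fintype.sum_prod_type]
    simp only [Finset.sum_neg_distrib]
    rw [← sum_rot' (fun a b c => r a b c * L (rU b c))]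
    congr 1
    apply Finset.sum_congr rfl; intro b _
    apply Finset.sum_congr rfl; intro c _
    rw [← Finset.sum_mul, hmU b c]
  rw [eT, eY, eW, eU]
  have hsum : (∑ a, ∑ b, ∑ c, (r a b c * L (rW a c) + r a b c * L (rU b c)))
      = ∑ a, ∑ b, ∑ c, (r a b c * L (r a b c) + r a b c * L (rY c)) :=
    Finset.sum_congr rfl fun a _ => Finset.sum_congr rfl fun b _ =>
      Finset.sum_congr rfl fun c _ => key a b c
  simp only [Finset.sum_add_distrib] at hsum
  linarith


lemma submodular (hp : IsPMF p) (X : Ω → α) (Y : Ω → β) (Z : Ω → γ) :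
    ent p (fun ω => ((X ω, Y ω), Z ω)) + ent p Z
      ≤ ent p (fun ω => (X ω, Z ω)) + ent p (fun ω => (Y ω, Z ω)) := by
  classical
  have hlog2 : (0:ℝ) < Real.log 2 := Real.log_pos one_lt_two
  set L : ℝ → ℝ := Real.logb 2 with hL
  set r : α → β → γ → ℝ := fun a b c => prob p (fun ω => ((X ω, Y ω), Z ω)) ((a, b), c) with hr
  set rX : α → γ → ℝ := fun a c => prob p (fun ω => (X ω, Z ω)) (a, c) with hrX
  set rY : β → γ → ℝ := fun b c => prob p (fun ω => (Y ω, Z ω)) (b, c) with hrY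
  set rZ : γ → ℝ := fun c => prob p Z c with hrZ
  have rc1 : ∀ a b c, r a b c = prob p (fun ω => (Y ω, (X ω, Z ω))) (b, (a, c)) := by
    intro a b c
    apply prob_congr; intro ω
    constructor <;> (intro hh; simp only [Prod.mk.injEq] at hh ⊢; tauto)
  have rc2 : ∀ a b c, r a b c = prob p (fun ω => (X ω, (Y ω, Z ω))) (a, (b, c)) := by
    intro a b c
    apply prob_congr; intro ω
    constructor <;> (intro hh; simp only [Prod.mk.injEq] at hh ⊢; tauto)
  have rc3 : ∀ a b c, r a b c = prob p (fun ω => ((fun ω => (X ω, Y ω)) ω, Z ω)) ((a,b), c) :=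
    fun a b c => rfl
  have hmX : ∀ a c, ∑ b, r a b c = rX a c := by
    intro a c
    calc ∑ b, r a b c = ∑ b, prob p (fun ω => (Y ω, (X ω, Z ω))) (b, (a, c)) :=
          Finset.sum_congr rfl fun b _ => rc1 a b c
      _ = rX a c := sum_prob_pair_left _ _ _
  have hmY : ∀ b c, ∑ a, r a b c = rY b c := by
    intro b c
    calc ∑ a, r a b c = ∑ a, prob p (fun ω => (X ω, (Y ω, Z ω))) (a, (b, c)) :=
          Finset.sum_congr rfl fun a _ => rc2 a b c
      _ = rY b c := sum_prob_pair_left _ _ _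
  have hmZ : ∀ c, ∑ a, ∑ b, r a b c = rZ c := by
    intro c
    calc ∑ a, ∑ b, r a b c = ∑ a, rX a c :=
          Finset.sum_congr rfl fun a _ => hmX a c
      _ = rZ c := sum_prob_pair_left X Z c
  have hrnn : ∀ a b c, 0 ≤ r a b c := fun a b c => prob_nonneg hp _ _
  have hXnn : ∀ a c, 0 ≤ rX a c := fun a c => prob_nonneg hp _ _
  have hYnn : ∀ b c, 0 ≤ rY b c := fun b c => prob_nonneg hp _ _
  have hZnn : ∀ c, 0 ≤ rZ c := fun c => prob_nonneg hp _ _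
  have hleX : ∀ a b c, r a b c ≤ rX a c := by
    intro a b c; rw [rc1 a b c]; exact prob_pair_le_snd hp _ _ _ _
  have hleY : ∀ a b c, r a b c ≤ rY b c := by
    intro a b c; rw [rc2 a b c]; exact prob_pair_le_snd hp _ _ _ _
  have hleZ : ∀ a b c, r a b c ≤ rZ c := fun a b c =>
    prob_pair_le_snd hp (fun ω => (X ω, Y ω)) Z (a, b) c
  set g : α → β → γ → ℝ := fun a b c => if rZ c = 0 then 0 else rX a c * rY b c / rZ c with hg
  have gnn : ∀ a b c, 0 ≤ g a b c := by
    intro a b c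
    rw [hg]
    dsimp only
    split
    · exact le_refl 0
    · exact div_nonneg (mul_nonneg (hXnn a c) (hYnn b c)) (hZnn c)
  have gsum : ∀ c, ∑ a, ∑ b, g a b c = rZ c := by
    intro c
    by_cases h0 : rZ c = 0
    · simp [hg, h0]
    · simp only [hg, if_neg h0]
      simp only [div_eq_mul_inv, mul_assoc, ← Finset.mul_sum, ← Finset.sum_mul]
      rw [sum_prob_pair_left X Z c, sum_prob_pair_left Y Z c]
      field_simp
      rfl
  have bound : ∀ a b c, r a b c * L (rX a c) + r a b c * L (rY b c)
      - r a b c * L (r a b c) - r a b c * L (rZ c) ≤ (g a b c - r a b c) / Real.log 2 := by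
    intro a b c
    rcases eq_or_lt_of_le (hrnn a b c) with h0 | h0
    · rw [← h0]
      have hga := gnn a b c
      have h1 : (0:ℝ) ≤ g a b c / Real.log 2 := div_nonneg hga hlog2.le
      simp only [zero_mul, sub_zero, add_zero, zero_sub, neg_zero]
      simpa using h1
    · have hX0 : 0 < rX a c := h0.trans_le (hleX a b c)
      have hY0 : 0 < rY b c := h0.trans_le (hleY a b c)
      have hZ0 : 0 < rZ c := h0.trans_le (hleZ a b c)
      have hgval : g a b c = rX a c * rY b c / rZ c := by rw [hg]; simp [hZ0.ne']
      have hg0 : 0 < g a b c := by rw [hgval]; exact div_pos (mul_pos hX0 hY0) hZ0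
      have e1 : Real.log (g a b c / r a b c)
          = Real.log (rX a c) + Real.log (rY b c) - Real.log (rZ c) - Real.log (r a b c) := by
        rw [Real.log_div hg0.ne' h0.ne', hgval, Real.log_div (mul_pos hX0 hY0).ne' hZ0.ne',
          Real.log_mul hX0.ne' hY0.ne']
      have hlog := Real.log_le_sub_one_of_pos (div_pos hg0 h0)
      have key2 : r a b c * Real.log (rX a c) + r a b c * Real.log (rY b c)
          - r a b c * Real.log (r a b c) - r a b c * Real.log (rZ c)
          ≤ g a b c - r a b c := by
        have h2 : r a b c * (g a b c / r a b c - 1) = g a b c - r a b c := by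
          field_simp
        have h3 := mul_le_mul_of_nonneg_left hlog h0.le
        have e1r : r a b c * Real.log (g a b c / r a b c)
            = r a b c * Real.log (rX a c) + r a b c * Real.log (rY b c)
              - r a b c * Real.log (rZ c) - r a b c * Real.log (r a b c) := by
          rw [e1]; ring
        linarith
      rw [hL]
      simp only [Real.logb]
      rw [show r a b c * (Real.log (rX a c) / Real.log 2)
            + r a b c * (Real.log (rY b c) / Real.log 2)
            - r a b c * (Real.log (r a b c) / Real.log 2)
            - r a b c * (Real.log (rZ c) / Real.log 2)
          = (r a b c * Real.log (rX a c) + r a b c * Real.log (rY b c)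
            - r a b c * Real.log (r a b c) - r a b c * Real.log (rZ c)) / Real.log 2 from by ring]
      exact div_le_div_of_nonneg_right key2 hlog2.le
  have eT : ent p (fun ω => ((X ω, Y ω), Z ω)) = -∑ a, ∑ b, ∑ c, r a b c * L (r a b c) := by
    unfold ent
    simp only [Fintype.sum_prod_type, Finset.sum_neg_distrib]
    rfl
  have eZ : ent p Z = -∑ a, ∑ b, ∑ c, r a b c * L (rZ c) := by
    unfold ent
    simp only [Finset.sum_neg_distrib]
    rw [← sum_rot (fun a b c => r a b c * L (rZ c))]
    congr 1
    apply Finset.sum_congr rfl; intro c _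
    simp only [← Finset.sum_mul]
    rw [hmZ c]
  have eXZ : ent p (fun ω => (X ω, Z ω)) = -∑ a, ∑ b, ∑ c, r a b c * L (rX a c) := by
    unfold ent
    rw [Fintype.sum_prod_type]
    simp only [Finset.sum_neg_distrib]
    rw [show (∑ a, ∑ b, ∑ c, r a b c * L (rX a c)) = ∑ a, ∑ c, ∑ b, r a b c * L (rX a c) from
      Finset.sum_congr rfl fun a _ => Finset.sum_comm]
    congr 1
    apply Finset.sum_congr rfl; intro a _
    apply Finset.sum_congr rfl; intro c _
    rw [← Finset.sum_mul, hmX a c]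
  have eYZ : ent p (fun ω => (Y ω, Z ω)) = -∑ a, ∑ b, ∑ c, r a b c * L (rY b c) := by
    unfold ent
    rw [Fintype.sum_prod_type]
    simp only [Finset.sum_neg_distrib]
    rw [← sum_rot' (fun a b c => r a b c * L (rY b c))]
    congr 1
    apply Finset.sum_congr rfl; intro b _
    apply Finset.sum_congr rfl; intro c _
    rw [← Finset.sum_mul, hmY b c]
  have sr : ∑ a, ∑ b, ∑ c, r a b c = 1 := by
    have h1 := sum_prob hp (fun ω => ((X ω, Y ω), Z ω))
    simp only [Fintype.sum_prod_type] at h1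
    exact h1
  have sg : ∑ a, ∑ b, ∑ c, g a b c = 1 := by
    rw [← sum_rot g]
    rw [show (∑ c, ∑ a, ∑ b, g a b c) = ∑ c, rZ c from
      Finset.sum_congr rfl fun c _ => gsum c]
    exact sum_prob hp Z
  have big : ∑ a, ∑ b, ∑ c, (r a b c * L (rX a c) + r a b c * L (rY b c)
      - r a b c * L (r a b c) - r a b c * L (rZ c))
      ≤ ∑ a, ∑ b, ∑ c, (g a b c - r a b c) / Real.log 2 :=
    Finset.sum_le_sum fun a _ => Finset.sum_le_sum fun b _ =>
      Finset.sum_le_sum fun c _ => bound a b c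
  have rsum0 : (∑ a, ∑ b, ∑ c, (g a b c - r a b c) / Real.log 2) = 0 := by
    have hsplit : (∑ a, ∑ b, ∑ c, (g a b c - r a b c) / Real.log 2)
        = ((∑ a, ∑ b, ∑ c, g a b c) - (∑ a, ∑ b, ∑ c, r a b c)) / Real.log 2 := by
      simp only [div_eq_mul_inv, sub_mul, Finset.sum_sub_distrib, ← Finset.sum_mul]
    rw [hsplit, sg, sr, sub_self, zero_div]
  rw [eT, eZ, eXZ, eYZ]
  rw [rsum0] at big
  simp only [Finset.sum_add_distrib, Finset.sum_sub_distrib] at big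
  linarith

end H


/-- If `(X1, Ŷ2) → Y2 → U` is a Markov chain, then
`I(X1, U, Ŷ2; Y3) − I(U, Ŷ2; Y2 | X1)
  ≥ I(X1, Ŷ2; Y3) − I(Ŷ2; Y2 | X1) + I(U; Y3) − I(U; Y2)`. -/
theorem stmt5 {Ω α β γ δ υ : Type*} [Fintype Ω] [Fintype α] [DecidableEq α]
    [Fintype β] [DecidableEq β] [Fintype γ] [DecidableEq γ]
    [Fintype δ] [DecidableEq δ] [Fintype υ] [DecidableEq υ]
    (p : Ω → ℝ) (hp : IsPMF p)
    (X1 : Ω → α) (Yh2 : Ω → δ) (Y2 : Ω → β) (U : Ω → υ) (Y3 : Ω → γ)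
    (hMarkov : CondIndep p (fun ω => (X1 ω, Yh2 ω)) U Y2) :
    mutInfo p (fun ω => (X1 ω, U ω, Yh2 ω)) Y3
      - condMutInfo p (fun ω => (U ω, Yh2 ω)) Y2 X1
    ≥ mutInfo p (fun ω => (X1 ω, Yh2 ω)) Y3 - condMutInfo p Yh2 Y2 X1
      + mutInfo p U Y3 - mutInfo p U Y2 := by
  have hA : ent p (fun ω => (((X1 ω, Yh2 ω), U ω), Y3 ω)) + ent p Y3
      ≤ ent p (fun ω => ((X1 ω, Yh2 ω), Y3 ω)) + ent p (fun ω => (U ω, Y3 ω)) :=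
    submodular hp (fun ω => (X1 ω, Yh2 ω)) U Y3
  have hB : ent p (fun ω => ((X1 ω, Yh2 ω), U ω, Y2 ω)) + ent p Y2
      = ent p (fun ω => ((X1 ω, Yh2 ω), Y2 ω)) + ent p (fun ω => (U ω, Y2 ω)) :=
    markov_ent hp (fun ω => (X1 ω, Yh2 ω)) U Y2 hMarkov
  have hf1 : Function.Injective (fun x : α × υ × δ => ((x.2.1, x.2.2), x.1)) := by
    intro x y h; simp only [Prod.mk.injEq] at h; exact Prod.ext h.2 (Prod.ext h.1.1 h.1.2)
  have h1 : ent p (fun ω => ((U ω, Yh2 ω), X1 ω)) = ent p (fun ω => (X1 ω, U ω, Yh2 ω)) :=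
    ent_comp_inj hf1 (fun ω => (X1 ω, U ω, Yh2 ω))
  have hf2 : Function.Injective
      (fun x : (α × υ × δ) × γ => (((x.1.1, x.1.2.2), x.1.2.1), x.2)) := by
    intro x y h; simp only [Prod.mk.injEq] at h
    exact Prod.ext (Prod.ext h.1.1.1 (Prod.ext h.1.2 h.1.1.2)) h.2
  have h2 : ent p (fun ω => (((X1 ω, Yh2 ω), U ω), Y3 ω))
      = ent p (fun ω => ((X1 ω, U ω, Yh2 ω), Y3 ω)) :=
    ent_comp_inj hf2 (fun ω => ((X1 ω, U ω, Yh2 ω), Y3 ω))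
  have hf3 : Function.Injective
      (fun x : ((υ × δ) × β) × α => ((x.2, x.1.1.2), x.1.1.1, x.1.2)) := by
    intro x y h; simp only [Prod.mk.injEq] at h
    exact Prod.ext (Prod.ext (Prod.ext h.2.1 h.1.2) h.2.2) h.1.1
  have h3 : ent p (fun ω => ((X1 ω, Yh2 ω), U ω, Y2 ω))
      = ent p (fun ω => (((U ω, Yh2 ω), Y2 ω), X1 ω)) :=
    ent_comp_inj hf3 (fun ω => (((U ω, Yh2 ω), Y2 ω), X1 ω))
  have hf4 : Function.Injective (fun x : (δ × β) × α => ((x.2, x.1.1), x.1.2)) := by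
    intro x y h; simp only [Prod.mk.injEq] at h
    exact Prod.ext (Prod.ext h.1.2 h.2) h.1.1
  have h4 : ent p (fun ω => ((X1 ω, Yh2 ω), Y2 ω))
      = ent p (fun ω => ((Yh2 ω, Y2 ω), X1 ω)) :=
    ent_comp_inj hf4 (fun ω => ((Yh2 ω, Y2 ω), X1 ω))
  have hf5 : Function.Injective (fun x : δ × α => (x.2, x.1)) := by
    intro x y h; simp only [Prod.mk.injEq] at h; exact Prod.ext h.2 h.1
  have h5 : ent p (fun ω => (X1 ω, Yh2 ω)) = ent p (fun ω => (Yh2 ω, X1 ω)) :=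
    ent_comp_inj hf5 (fun ω => (Yh2 ω, X1 ω))
  simp only [ge_iff_le, mutInfo, condMutInfo, condEnt]
  linarith
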